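/- Let G=(V,E) be a finite undirected graph with threshold function t:V→ℕ satisfying 1 ≤ t(v) ≤ d(v) for every vertex v (where d(v) is the degree of v). Then there exists a target vector s for G whose cost satisfies C(s) = Σ_{v∈V} s(v) ≤ Σ_{v∈V} t(v)·(t(v)+1)/(2·(d(v)+1)). -/

import Mathlib

set_option linter.unusedSectionVars false


/-- `activeVec G t s ℓ` : the set of vertices active at round `ℓ` of the activation
process in `G` with thresholds `t`, starting with partial incentives `s`. -/
def activeVec {V : Type*} [Fintype V] [DecidableEq V] (G : SimpleGraph V) [DecidableRel G.Adj]
    (t s : V → ℕ) : ℕ → Finset V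
  | 0 => Finset.univ.filter fun v => t v ≤ s v
  | ℓ + 1 =>
    activeVec G t s ℓ ∪
      Finset.univ.filter fun u => t u - s u ≤ (G.neighborFinset u ∩ activeVec G t s ℓ).card

/-- `s` is a target vector for `G` (with thresholds `t`) if the activation process
starting with incentives `s` eventually activates the whole vertex set. -/
def isTargetVec {V : Type*} [Fintype V] [DecidableEq V] (G : SimpleGraph V) [DecidableRel G.Adj]
    (t s : V → ℕ) : Prop :=
  ∃ ℓ, activeVec G t s ℓ = Finset.univ

namespace TPI

variable {V : Type*} [Fintype V] [DecidableEq V] (G : SimpleGraph V) [DecidableRel G.Adj]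
  (t : V → ℕ)

/-- degree into a set `A`. -/
def ndeg (A : Finset V) (v : V) : ℕ := (G.neighborFinset v ∩ A).card

/-- `S tv d = ∑_{x=0}^{d} (tv - x)₊` as a rational. -/
def S (tv d : ℕ) : ℚ := ∑ x ∈ Finset.range (d + 1), ((tv - x : ℕ) : ℚ)

def w (A : Finset V) (v : V) : ℚ := S (t v) (ndeg G A v) / (ndeg G A v + 1)

def bound (A : Finset V) : ℚ := ∑ v ∈ A, w G t A v

/-- cost of an ordering. -/
def cost : List V → ℚ
  | [] => 0
  | u :: L => ((t u - (G.neighborFinset u ∩ L.toFinset).card : ℕ) : ℚ) + cost L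

/-- the incentive vector determined by an ordering. -/
def sOf : List V → V → ℕ
  | [], _ => 0
  | u :: L, v => if v = u then t u - (G.neighborFinset u ∩ L.toFinset).card else sOf L v

lemma S_succ (tv d : ℕ) : S tv (d + 1) = S tv d + ((tv - (d + 1) : ℕ) : ℚ) :=
  Finset.sum_range_succ _ _

lemma S_of_le {tv d : ℕ} (h : tv ≤ d) : S tv d = tv * (tv + 1) / 2 := by
  have h1 : ∑ x ∈ Finset.range (d + 1), (tv - x) = ∑ x ∈ Finset.range (tv + 1), (tv - x) := by
    refine (Finset.sum_subset (Finset.range_subset_range.2 (by omega)) ?_).symm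
    intro x _ hx
    simp only [Finset.mem_range] at hx
    omega
  have h2 : ∑ x ∈ Finset.range (tv + 1), (tv - x) = ∑ x ∈ Finset.range (tv + 1), x := by
    simpa using Finset.sum_range_reflect (fun x => x) (tv + 1)
  have h3 : (∑ i ∈ Finset.range (tv + 1), i) * 2 = (tv + 1) * tv := by
    simpa using Finset.sum_range_id_mul_two (tv + 1)
  have h4 : S tv d = ((∑ x ∈ Finset.range (d + 1), (tv - x) : ℕ) : ℚ) := by
    rw [Nat.cast_sum]; rfl
  rw [h4, h1, h2]
  have h5 := congrArg (fun n : ℕ => (n : ℚ)) h3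
  push_cast at h5 ⊢
  linarith

lemma self_not_mem_neighborFinset (v : V) : v ∉ G.neighborFinset v := by
  simp [SimpleGraph.mem_neighborFinset]

/-- Key per-vertex averaging identity. -/
lemma per_vertex (A : Finset V) {v : V} (hv : v ∈ A) :
    ((t v - ndeg G A v : ℕ) : ℚ) + ∑ u ∈ A.erase v, w G t (A.erase u) v
      = A.card * w G t A v := by
  have hNsub : G.neighborFinset v ∩ A ⊆ A.erase v := by
    intro u hu
    rw [Finset.mem_inter] at hu
    refine Finset.mem_erase.2 ⟨?_, hu.2⟩
    rintro rfl
    exact self_not_mem_neighborFinset G _ hu.1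
  have hdle : ndeg G A v + 1 ≤ A.card := by
    have h1 := Finset.card_le_card hNsub
    rw [Finset.card_erase_of_mem hv] at h1
    have hA1 : 1 ≤ A.card := Finset.card_pos.2 ⟨v, hv⟩
    unfold ndeg
    omega
  have hval1 : ∀ u ∈ G.neighborFinset v ∩ A,
      w G t (A.erase u) v = S (t v) (ndeg G A v - 1) / (ndeg G A v) := by
    intro u hu
    have hd1 : 1 ≤ ndeg G A v := Finset.card_pos.2 ⟨u, hu⟩
    have hnd : ndeg G (A.erase u) v = ndeg G A v - 1 := by
      unfold ndeg
      rw [Finset.inter_erase, Finset.card_erase_of_mem hu]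
    simp only [w, hnd]
    congr 1
    push_cast [Nat.cast_sub hd1]
    ring
  have hval2 : ∀ u ∈ A.erase v \ (G.neighborFinset v ∩ A),
      w G t (A.erase u) v = w G t A v := by
    intro u hu
    rw [Finset.mem_sdiff] at hu
    have hnd : ndeg G (A.erase u) v = ndeg G A v := by
      unfold ndeg
      rw [Finset.inter_erase, Finset.erase_eq_of_notMem hu.2]
    simp only [w, hnd]
  have hsplit : ∑ u ∈ A.erase v, w G t (A.erase u) v
      = ∑ u ∈ A.erase v \ (G.neighborFinset v ∩ A), w G t (A.erase u) v
        + ∑ u ∈ G.neighborFinset v ∩ A, w G t (A.erase u) v :=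
    (Finset.sum_sdiff hNsub).symm
  rw [hsplit, Finset.sum_congr rfl hval1, Finset.sum_congr rfl hval2,
    Finset.sum_const, Finset.sum_const]
  have hcard_sdiff : (A.erase v \ (G.neighborFinset v ∩ A)).card = A.card - 1 - ndeg G A v := by
    rw [Finset.card_sdiff_of_subset hNsub, Finset.card_erase_of_mem hv]; rfl
  rw [hcard_sdiff, nsmul_eq_mul, nsmul_eq_mul]
  have hcardN : ((G.neighborFinset v ∩ A).card : ℚ) = (ndeg G A v : ℚ) := rfl
  rw [hcardN]
  have hC : ((A.card - 1 - ndeg G A v : ℕ) : ℚ) = (A.card : ℚ) - 1 - ndeg G A v := by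
    have h1 : ndeg G A v ≤ A.card - 1 := by omega
    have h2 : 1 ≤ A.card := by omega
    push_cast [Nat.cast_sub h1, Nat.cast_sub h2]
    ring
  rw [hC]
  -- key pointwise identity
  have hkey : (ndeg G A v : ℚ) * (S (t v) (ndeg G A v - 1) / (ndeg G A v))
      = S (t v) (ndeg G A v) - ((t v - ndeg G A v : ℕ) : ℚ) := by
    rcases Nat.eq_zero_or_pos (ndeg G A v) with h0 | hpos
    · rw [h0]
      simp [S]
    · have h1d : ndeg G A v - 1 + 1 = ndeg G A v := by omega
      have hSd : S (t v) (ndeg G A v) = S (t v) (ndeg G A v - 1)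
          + ((t v - ndeg G A v : ℕ) : ℚ) := by
        conv_lhs => rw [← h1d]
        rw [S_succ, h1d]
      have hdQ : ((ndeg G A v : ℕ) : ℚ) ≠ 0 := Nat.cast_ne_zero.2 (by omega)
      rw [hSd]
      field_simp
      ring
  rw [hkey]
  simp only [w]
  have hd1Q : (ndeg G A v : ℚ) + 1 ≠ 0 := by positivity
  field_simp
  ring

lemma sum_erase_comm (A : Finset V) (F : V → V → ℚ) :
    ∑ u ∈ A, ∑ v ∈ A.erase u, F u v = ∑ v ∈ A, ∑ u ∈ A.erase v, F u v := by
  have h1 : ∀ u ∈ A, ∑ v ∈ A.erase u, F u v = (∑ v ∈ A, F u v) - F u u := fun u hu =>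
    Finset.sum_erase_eq_sub hu
  have h2 : ∀ v ∈ A, ∑ u ∈ A.erase v, F u v = (∑ u ∈ A, F u v) - F v v := fun v hv =>
    Finset.sum_erase_eq_sub hv
  rw [Finset.sum_congr rfl h1, Finset.sum_congr rfl h2, Finset.sum_sub_distrib,
    Finset.sum_sub_distrib, Finset.sum_comm]

/-- The averaging identity over the choice of the first vertex. -/
lemma avg (A : Finset V) :
    ∑ u ∈ A, (((t u - ndeg G A u : ℕ) : ℚ) + bound G t (A.erase u))
      = A.card * bound G t A := by
  have h1 : ∀ u ∈ A, bound G t (A.erase u) = ∑ v ∈ A.erase u, w G t (A.erase u) v :=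
    fun u _ => rfl
  rw [Finset.sum_add_distrib, Finset.sum_congr rfl h1,
    sum_erase_comm A (fun u v => w G t (A.erase u) v), ← Finset.sum_add_distrib]
  have h2 : ∀ v ∈ A, (((t v - ndeg G A v : ℕ) : ℚ) + ∑ u ∈ A.erase v, w G t (A.erase u) v)
      = A.card * w G t A v := fun v hv => per_vertex G t A hv
  rw [Finset.sum_congr rfl h2, ← Finset.mul_sum]
  rfl

/-- Existence of a good ordering of any finite vertex set. -/
lemma exists_good_list : ∀ n (A : Finset V), A.card = n →
    ∃ L : List V, L.Nodup ∧ L.toFinset = A ∧ cost G t L ≤ bound G t A := by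
  intro n
  induction n with
  | zero =>
    intro A hA
    refine ⟨[], List.nodup_nil, ?_, ?_⟩
    · simp [Finset.card_eq_zero.1 hA]
    · simp [cost, bound, Finset.card_eq_zero.1 hA]
  | succ n ih =>
    intro A hA
    have hne : A.Nonempty := Finset.card_pos.1 (by omega)
    have havg := avg G t A
    have hsum : ∑ u ∈ A, (((t u - ndeg G A u : ℕ) : ℚ) + bound G t (A.erase u))
        ≤ ∑ _u ∈ A, bound G t A := by
      rw [havg, Finset.sum_const, nsmul_eq_mul]
    obtain ⟨u, hu, hle⟩ := Finset.exists_le_of_sum_le hne hsum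
    have hcard : (A.erase u).card = n := by
      rw [Finset.card_erase_of_mem hu, hA]; omega
    obtain ⟨L, hnd, htf, hcost⟩ := ih (A.erase u) hcard
    refine ⟨u :: L, ?_, ?_, ?_⟩
    · refine List.nodup_cons.2 ⟨?_, hnd⟩
      intro hmem
      have : u ∈ A.erase u := htf ▸ List.mem_toFinset.2 hmem
      exact (Finset.mem_erase.1 this).1 rfl
    · rw [List.toFinset_cons, htf, Finset.insert_erase hu]
    · have hcc : cost G t (u :: L)
          = ((t u - (G.neighborFinset u ∩ L.toFinset).card : ℕ) : ℚ) + cost G t L := rfl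
      have hdd : (G.neighborFinset u ∩ L.toFinset).card = ndeg G A u := by
        rw [htf]
        unfold ndeg
        rw [Finset.inter_erase, Finset.erase_eq_of_notMem]
        simp [self_not_mem_neighborFinset]
      rw [hcc, hdd]
      calc ((t u - ndeg G A u : ℕ) : ℚ) + cost G t L
          ≤ ((t u - ndeg G A u : ℕ) : ℚ) + bound G t (A.erase u) := by linarith
        _ ≤ bound G t A := hle

lemma sum_sOf (L : List V) (hnd : L.Nodup) :
    ∑ v ∈ L.toFinset, ((sOf G t L v : ℕ) : ℚ) = cost G t L := by
  induction L with
  | nil => simp [cost]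
  | cons u L ih =>
    rw [List.nodup_cons] at hnd
    have hu : u ∉ L.toFinset := fun h => hnd.1 (List.mem_toFinset.1 h)
    rw [List.toFinset_cons, Finset.sum_insert hu]
    have h1 : (sOf G t (u :: L) u : ℚ)
        = ((t u - (G.neighborFinset u ∩ L.toFinset).card : ℕ) : ℚ) := by
      simp [sOf]
    have h2 : ∀ v ∈ L.toFinset, ((sOf G t (u :: L) v : ℕ) : ℚ) = ((sOf G t L v : ℕ) : ℚ) := by
      intro v hv
      have : v ≠ u := fun h => hu (h ▸ hv)
      simp [sOf, this]
    rw [h1, Finset.sum_congr rfl h2, ih hnd.2]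
    rfl

lemma sOf_suffix : ∀ (L₁ : List V) {L₂ : List V} {v : V}, (L₁ ++ v :: L₂).Nodup →
    sOf G t (L₁ ++ v :: L₂) v = t v - (G.neighborFinset v ∩ L₂.toFinset).card := by
  intro L₁
  induction L₁ with
  | nil => intro L₂ v _; simp [sOf]
  | cons u L₁ ih =>
    intro L₂ v hnd
    rw [List.cons_append, List.nodup_cons] at hnd
    have hne : v ≠ u := by
      rintro rfl
      exact hnd.1 (by simp)
    rw [List.cons_append]
    show (if v = u then _ else sOf G t (L₁ ++ v :: L₂) v) = _
    rw [if_neg hne]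
    exact ih hnd.2

lemma active_succ_mono (s : V → ℕ) (ℓ : ℕ) :
    activeVec G t s ℓ ⊆ activeVec G t s (ℓ + 1) := by
  rw [activeVec]
  exact Finset.subset_union_left

lemma suffix_active (L : List V) (hnd : L.Nodup) :
    ∀ (L₂ L₁ : List V), L = L₁ ++ L₂ →
      L₂.toFinset ⊆ activeVec G t (sOf G t L) L₂.length := by
  intro L₂
  induction L₂ with
  | nil => intro L₁ _; simp
  | cons v L₃ ih =>
    intro L₁ hL
    have hL' : L = (L₁ ++ [v]) ++ L₃ := by rw [hL]; simp
    have hIH := ih (L₁ ++ [v]) hL'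
    rw [List.toFinset_cons]
    intro x hx
    rcases Finset.mem_insert.1 hx with rfl | hx'
    · -- x = v : it becomes active at round L₃.length + 1
      have hs : sOf G t L x = t x - (G.neighborFinset x ∩ L₃.toFinset).card := by
        rw [hL]
        exact sOf_suffix G t L₁ (hL ▸ hnd)
      have hsub : G.neighborFinset x ∩ L₃.toFinset
          ⊆ G.neighborFinset x ∩ activeVec G t (sOf G t L) L₃.length :=
        Finset.inter_subset_inter (le_refl _) hIH
      have hcard := Finset.card_le_card hsub
      have hts : t x - sOf G t L x
          ≤ (G.neighborFinset x ∩ activeVec G t (sOf G t L) L₃.length).card := by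
        rw [hs]
        omega
      show x ∈ activeVec G t (sOf G t L) (L₃.length + 1)
      rw [activeVec]
      exact Finset.mem_union_right _ (Finset.mem_filter.2 ⟨Finset.mem_univ _, hts⟩)
    · exact active_succ_mono G t _ _ (hIH hx')

end TPI

/-- There exists a target vector `s` with cost
`∑_{v∈V} s(v) ≤ ∑_{v∈V} t(v)(t(v)+1)/(2(d(v)+1))`. -/
theorem exists_target_vector_cost_le {V : Type*} [Fintype V] [DecidableEq V]
    (G : SimpleGraph V) [DecidableRel G.Adj] (t : V → ℕ)
    (ht : ∀ v, 1 ≤ t v ∧ t v ≤ G.degree v) :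
    ∃ s : V → ℕ, isTargetVec G t s ∧
      (∑ v : V, (s v : ℚ)) ≤
        ∑ v : V, (t v : ℚ) * ((t v : ℚ) + 1) / (2 * ((G.degree v : ℚ) + 1)) := by
  obtain ⟨L, hnd, htf, hcost⟩ := TPI.exists_good_list G t (Finset.univ.card) Finset.univ rfl
  refine ⟨TPI.sOf G t L, ?_, ?_⟩
  · refine ⟨L.length, ?_⟩
    apply Finset.eq_univ_of_forall
    intro v
    have h := TPI.suffix_active G t L hnd L [] rfl
    rw [htf] at h
    exact h (Finset.mem_univ v)
  · have h1 : ∑ v : V, ((TPI.sOf G t L v : ℕ) : ℚ) = TPI.cost G t L := by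
      rw [← htf]
      exact TPI.sum_sOf G t L hnd
    rw [h1]
    refine le_trans hcost ?_
    have h2 : ∀ v : V, TPI.w G t Finset.univ v
        = (t v : ℚ) * ((t v : ℚ) + 1) / (2 * ((G.degree v : ℚ) + 1)) := by
      intro v
      have hd : TPI.ndeg G Finset.univ v = G.degree v := by
        unfold TPI.ndeg
        rw [Finset.inter_univ]
        exact G.card_neighborFinset_eq_degree v
      have hS := TPI.S_of_le (tv := t v) (d := G.degree v) (ht v).2
      rw [TPI.w, hd, hS]
      have : ((G.degree v : ℚ) + 1) ≠ 0 := by positivity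
      field_simp
    rw [TPI.bound, Finset.sum_congr rfl (fun v _ => h2 v)]
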